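/- Fix real numbers a, b with 0 ≤ a ≤ b. For ρ > 0 let B_ρ denote the hyperbolic ball of radius ρ centered at e^{ρ} i in the upper half-plane, and let ν_ρ(S) denote the hyperbolic area of a set S. Then, as ρ → ∞, the ratio ν_ρ({z ∈ B_ρ : a < log(Im z) < b}) / ν_ρ(B_ρ) converges to (2/π) ∫_a^b √(e^{−t} − e^{−2t}) dt. -/

import Mathlib

open Complex Metric Set MeasureTheory Filter

/-- The hyperbolic area measure on the upper half-plane: density `(Im z)⁻²`
against two-dimensional Lebesgue measure on `ℂ`. -/
noncomputable def hypArea : Measure ℂ :=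
  volume.withDensity (fun z => ENNReal.ofReal (1 / z.im ^ 2))

/-- The hyperbolic ball of radius `ρ` centered at `e^ρ i` in the upper half-plane,
with the hyperbolic distance `dist z w = 2 arsinh(|z-w| / (2 √(Im z · Im w)))`. -/
noncomputable def hypBall (ρ : ℝ) : Set ℂ :=
  {z : ℂ | 0 < z.im ∧
    2 * Real.arsinh (‖z - Real.exp ρ * Complex.I‖ /
      (2 * Real.sqrt (z.im * Real.exp ρ))) < ρ}

noncomputable def fI (R y : ℝ) : ℝ := 2 * Real.sqrt ((y - 1) * (R - y)) / y ^ 2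

lemma sq_lt_set (c : ℝ) : {x : ℝ | x ^ 2 < c} = Ioo (-Real.sqrt c) (Real.sqrt c) := by
  ext x
  simp only [mem_setOf_eq, mem_Ioo, ← abs_lt, ← _root_.sq_abs x]
  exact ((Real.lt_sqrt (abs_nonneg x))).symm

lemma area_eq (R : ℝ) (T : Set ℝ) (hT : MeasurableSet T) (hT0 : T ⊆ Ioi 0) :
    hypArea {z : ℂ | z.im ∈ T ∧ z.re ^ 2 < (z.im - 1) * (R - z.im)} =
      ∫⁻ y in T, ENNReal.ofReal (fI R y) := by
  simp only [fI]
  have hS : MeasurableSet {z : ℂ | z.im ∈ T ∧ z.re ^ 2 < (z.im - 1) * (R - z.im)} := by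
    apply MeasurableSet.inter
    · exact Complex.measurable_im hT
    · exact measurableSet_lt (Complex.measurable_re.pow_const 2) (by measurability)
  set g : ℂ → ENNReal := fun z =>
    ({z : ℂ | z.im ∈ T ∧ z.re ^ 2 < (z.im - 1) * (R - z.im)}).indicator
      (fun z => ENNReal.ofReal (1 / z.im ^ 2)) z with hg
  have hgm : Measurable g := by
    apply Measurable.indicator _ hS
    measurability
  rw [hypArea, withDensity_apply _ hS, ← lintegral_indicator hS _]
  have h1 : ∫⁻ z, g z = ∫⁻ p : ℝ × ℝ, g (Complex.measurableEquivRealProd.symm p) :=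
    (Complex.volume_preserving_equiv_real_prod.symm _ |>.lintegral_comp hgm).symm
  rw [h1, Measure.volume_eq_prod, lintegral_prod_symm (fun p => g (Complex.measurableEquivRealProd.symm p)) ((hgm.comp Complex.measurableEquivRealProd.symm.measurable).aemeasurable)]
  rw [← lintegral_indicator hT _]
  congr 1
  ext y
  rcases Classical.em (y ∈ T) with hy | hy
  · have hy0 : 0 < y := hT0 hy
    have key : ∀ x : ℝ, g (Complex.mk x y) =
        ({x : ℝ | x ^ 2 < (y - 1) * (R - y)}).indicator
          (fun _ => ENNReal.ofReal (1 / y ^ 2)) x := by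
      intro x
      simp only [hg, indicator, mem_setOf_eq]
      simp [hy]
    simp only [show (fun x : ℝ => g (Complex.measurableEquivRealProd.symm (x, y)))
        = fun x : ℝ => g (Complex.mk x y) from rfl]
    simp only [key]
    rw [lintegral_indicator_const (by rw [sq_lt_set]; exact measurableSet_Ioo) _]
    rw [sq_lt_set, Real.volume_Ioo, indicator_of_mem hy]
    rw [← ENNReal.ofReal_mul (by positivity)]
    congr 1
    ring
  · have key : ∀ x : ℝ, g (Complex.mk x y) = 0 := by
      intro x
      simp only [hg, indicator, mem_setOf_eq]
      simp [hy]
    simp only [show (fun x : ℝ => g (Complex.measurableEquivRealProd.symm (x, y)))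
        = fun x : ℝ => g (Complex.mk x y) from rfl]
    simp [key, indicator_of_notMem hy]

lemma hypBall_eq {ρ : ℝ} (hρ : 0 < ρ) :
    hypBall ρ = {z : ℂ | 0 < z.im ∧ z.re ^ 2 < (z.im - 1) * (Real.exp (2 * ρ) - z.im)} := by
  ext z
  simp only [hypBall, mem_setOf_eq]
  refine and_congr_right fun hz => ?_
  set y := z.im with hy
  set E := Real.exp ρ with hE
  set A := ‖z - E * Complex.I‖ with hA'
  have hA : A ^ 2 = z.re ^ 2 + (y - E) ^ 2 := by
    rw [hA', Complex.sq_norm, Complex.normSq_apply]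
    simp [hy]
    ring
  have hyE : (0:ℝ) < y * E := by positivity
  have hs : 0 < Real.sinh (ρ/2) := by
    rw [← Real.sinh_zero]; exact Real.sinh_lt_sinh.2 (by linarith)
  have hu : 0 ≤ A / (2 * Real.sqrt (y * E)) := by positivity
  have e1 : 2 * Real.arsinh (A / (2 * Real.sqrt (y * E))) < ρ ↔
      Real.arsinh (A / (2 * Real.sqrt (y * E))) < ρ / 2 := by
    constructor <;> intro h <;> linarith
  rw [e1, ← Real.arsinh_sinh (ρ/2), Real.arsinh_lt_arsinh,
    ← pow_lt_pow_iff_left₀ hu hs.le two_ne_zero, div_pow, mul_pow,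
    Real.sq_sqrt hyE.le, div_lt_iff₀ (by positivity : (0:ℝ) < 2^2 * (y*E))]
  have c5 : Real.exp (ρ/2) * Real.exp (ρ/2) = E := by rw [hE, ← Real.exp_add]; ring_nf
  have c6 : E * E = Real.exp (2*ρ) := by rw [hE, ← Real.exp_add]; ring_nf
  have c7 : Real.exp (ρ/2) * Real.exp (-(ρ/2)) = 1 := by rw [← Real.exp_add]; simp
  have c8 : Real.exp (-(ρ/2)) * Real.exp (-(ρ/2)) = Real.exp (-ρ) := by
    rw [← Real.exp_add]; ring_nf
  have c9 : E * Real.exp (-ρ) = 1 := by rw [hE, ← Real.exp_add]; simp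
  have key : Real.sinh (ρ/2) ^ 2 * (2^2 * (y * E)) = y * (Real.exp (2*ρ) - 2*E + 1) := by
    rw [Real.sinh_eq]
    linear_combination (y*E)*c5 + y*c6 - (2*y*E)*c7 + (y*E)*c8 + y*c9
  rw [key, hA]
  have expand : y * (Real.exp (2*ρ) - 2*E + 1) - (y - E)^2 = (y - 1)*(Real.exp (2*ρ) - y) := by
    linear_combination (-1 : ℝ)*c6
  constructor <;> intro h <;> nlinarith [expand]

noncomputable def fF (y : ℝ) : ℝ :=
  2 * (Real.arctan (Real.sqrt (y - 1)) - Real.sqrt (y - 1) / y)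

noncomputable def bnd (y : ℝ) : ℝ := 2 * Real.sqrt (y - 1) / y ^ 2

lemma hasDerivAt_fF {y : ℝ} (hy : 1 < y) : HasDerivAt fF (bnd y) y := by
  have hy0 : y ≠ 0 := by linarith
  have hs0 : Real.sqrt (y - 1) ≠ 0 := by
    rw [ne_eq, Real.sqrt_eq_zero']; push_neg; linarith
  have hsq : HasDerivAt (fun x : ℝ => Real.sqrt (x - 1)) (1 / (2 * Real.sqrt (y - 1)) * 1) y := by
    exact (Real.hasDerivAt_sqrt (by linarith : y - 1 ≠ 0)).comp y ((hasDerivAt_id y).sub_const 1)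
  have harctan : HasDerivAt (fun x : ℝ => Real.arctan (Real.sqrt (x - 1)))
      (1 / (1 + Real.sqrt (y - 1) ^ 2) * (1 / (2 * Real.sqrt (y - 1)) * 1)) y :=
    hsq.arctan
  have hdiv : HasDerivAt (fun x : ℝ => Real.sqrt (x - 1) / x)
      ((1 / (2 * Real.sqrt (y - 1)) * 1 * y - Real.sqrt (y - 1) * 1) / y ^ 2) y :=
    hsq.div (hasDerivAt_id y) hy0
  have h : HasDerivAt fF _ y := ((harctan.sub hdiv).const_mul 2)
  convert h using 1
  have hs2 : Real.sqrt (y - 1) ^ 2 = y - 1 := Real.sq_sqrt (by linarith)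
  rw [bnd]
  rw [hs2]
  have h1y : 1 + (y - 1) = y := by ring
  rw [h1y]
  field_simp
  ring_nf

lemma continuousOn_fF : ContinuousOn fF (Ici 1) := by
  apply ContinuousOn.mul continuousOn_const
  apply ContinuousOn.sub
  · exact (Real.continuous_arctan.comp (Real.continuous_sqrt.comp (by continuity))).continuousOn
  · apply ContinuousOn.div
    · exact (Real.continuous_sqrt.comp (by continuity)).continuousOn
    · exact continuousOn_id
    · intro y hy; simp only [mem_Ici] at hy; intro h; rw [h] at hy; linarith [hy]

lemma sqrt_tendsto_atTop : Tendsto Real.sqrt atTop atTop := by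
  apply Filter.tendsto_atTop.2
  intro b
  filter_upwards [eventually_ge_atTop (max (b^2) 0)] with y hy
  rcases le_total b 0 with hb | hb
  · exact hb.trans (Real.sqrt_nonneg y)
  · rw [← Real.sqrt_sq hb]
    exact Real.sqrt_le_sqrt (le_trans (le_max_left _ _) hy)

lemma tendsto_fF : Tendsto fF atTop (nhds Real.pi) := by
  have h1 : Tendsto (fun y : ℝ => Real.arctan (Real.sqrt (y - 1))) atTop (nhds (Real.pi / 2)) := by
    refine (Real.tendsto_arctan_atTop.mono_right nhdsWithin_le_nhds).comp ?_
    exact sqrt_tendsto_atTop.comp (tendsto_atTop_add_const_right _ (-1) tendsto_id)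
  have h2 : Tendsto (fun y : ℝ => Real.sqrt (y - 1) / y) atTop (nhds 0) := by
    apply squeeze_zero' (g := fun y : ℝ => 1 / Real.sqrt y)
    · filter_upwards [eventually_ge_atTop (1:ℝ)] with y hy
      positivity
    · filter_upwards [eventually_ge_atTop (1:ℝ)] with y hy
      have hy0 : 0 < y := by linarith
      rw [div_le_div_iff₀ hy0 (by positivity)]
      calc Real.sqrt (y - 1) * Real.sqrt y ≤ Real.sqrt y * Real.sqrt y := by
            apply mul_le_mul_of_nonneg_right _ (Real.sqrt_nonneg y)
            exact Real.sqrt_le_sqrt (by linarith)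
        _ = y := Real.mul_self_sqrt hy0.le
        _ = 1 * y := (one_mul y).symm
    · exact tendsto_const_nhds.div_atTop sqrt_tendsto_atTop
  have := ((h1.sub h2).const_mul (2:ℝ))
  simp only [sub_zero] at this
  convert this using 2
  · rfl
  ring

lemma fF_one : fF 1 = 0 := by
  simp [fF]

lemma bnd_nonneg (y : ℝ) : 0 ≤ bnd y := by
  rw [bnd]; positivity

lemma integrableOn_bnd : IntegrableOn bnd (Ioi 1) := by
  apply integrableOn_Ioi_deriv_of_nonneg (continuousOn_fF.continuousWithinAt (by simp))
    (fun x hx => hasDerivAt_fF hx) (fun x _ => bnd_nonneg x) tendsto_fF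

lemma integral_bnd : ∫ y in Ioi 1, bnd y = Real.pi := by
  rw [integral_Ioi_of_hasDerivAt_of_nonneg (continuousOn_fF.continuousWithinAt (by simp))
    (fun x hx => hasDerivAt_fF hx) (fun x _ => bnd_nonneg x) tendsto_fF, fF_one, sub_zero]

noncomputable def hfun (ρ y : ℝ) : ℝ :=
  2 * Real.sqrt ((y - 1) * (1 - y * Real.exp (-(2 * ρ)))) / y ^ 2

lemma hfun_meas (ρ : ℝ) : Measurable (hfun ρ) := by
  apply Measurable.div
  · apply Measurable.const_mul
    exact (Real.continuous_sqrt.measurable).comp (by measurability)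
  · measurability

lemma hfun_nonneg (ρ y : ℝ) : 0 ≤ hfun ρ y := by
  rw [hfun]; positivity

lemma hfun_le {ρ y : ℝ} (hy : 1 ≤ y) : ‖hfun ρ y‖ ≤ bnd y := by
  rw [Real.norm_of_nonneg (hfun_nonneg ρ y), hfun, bnd]
  gcongr
  nlinarith [mul_nonneg (mul_nonneg (by linarith : (0:ℝ) ≤ y - 1)
      (by linarith : (0:ℝ) ≤ y)) (Real.exp_nonneg (-(2 * ρ)))]

lemma hfun_tendsto {y : ℝ} (hy : 1 < y) :
    Tendsto (fun ρ => hfun ρ y) atTop (nhds (bnd y)) := by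
  have h2 : Tendsto (fun ρ : ℝ => 2 * ρ) atTop atTop :=
    tendsto_id.const_mul_atTop two_pos
  have h3 : Tendsto (fun ρ : ℝ => -(2 * ρ)) atTop atBot :=
    tendsto_neg_atBot_iff.2 h2
  have h0 : Tendsto (fun ρ : ℝ => Real.exp (-(2 * ρ))) atTop (nhds 0) :=
    Real.tendsto_exp_atBot.comp h3
  have h1 : Tendsto (fun ρ : ℝ => 2 * Real.sqrt ((y - 1) * (1 - y * Real.exp (-(2 * ρ)))) / y ^ 2)
      atTop (nhds (2 * Real.sqrt ((y - 1) * (1 - y * 0)) / y ^ 2)) :=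
    (((tendsto_const_nhds.sub (tendsto_const_nhds.mul h0)).const_mul
      (y - 1)).sqrt.const_mul 2).div_const _
  simpa [bnd, hfun] using h1

lemma tendsto_D :
    Tendsto (fun ρ => ∫ y in Ioi (1:ℝ), hfun ρ y) atTop (nhds Real.pi) := by
  rw [← integral_bnd]
  apply tendsto_integral_filter_of_dominated_convergence bnd
  · exact Eventually.of_forall fun ρ => (hfun_meas ρ).aestronglyMeasurable
  · exact Eventually.of_forall fun ρ => (ae_restrict_iff' measurableSet_Ioi).2
      (Eventually.of_forall fun y hy => hfun_le (le_of_lt hy))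
  · exact integrableOn_bnd
  · exact (ae_restrict_iff' measurableSet_Ioi).2
      (Eventually.of_forall fun y hy => hfun_tendsto hy)

lemma tendsto_N {c d : ℝ} (hc : 1 ≤ c) :
    Tendsto (fun ρ => ∫ y in Ioo c d, hfun ρ y) atTop (nhds (∫ y in Ioo c d, bnd y)) := by
  apply tendsto_integral_filter_of_dominated_convergence bnd
  · exact Eventually.of_forall fun ρ => (hfun_meas ρ).aestronglyMeasurable
  · exact Eventually.of_forall fun ρ => (ae_restrict_iff' measurableSet_Ioo).2
      (Eventually.of_forall fun y hy => hfun_le (hc.trans hy.1.le))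
  · exact integrableOn_bnd.mono_set fun y hy => lt_of_lt_of_le (lt_of_le_of_lt hc hy.1) le_rfl
  · exact (ae_restrict_iff' measurableSet_Ioo).2
      (Eventually.of_forall fun y hy => hfun_tendsto (lt_of_le_of_lt hc hy.1))

lemma continuousOn_bnd : ContinuousOn bnd (Ici 1) := by
  apply ContinuousOn.div
  · exact (continuous_const.mul (Real.continuous_sqrt.comp (by continuity))).continuousOn
  · exact (continuous_pow 2).continuousOn
  · intro y hy
    simp only [mem_Ici] at hy
    positivity

lemma integral_value {a b : ℝ} (ha : 0 ≤ a) (hab : a ≤ b) :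
    ∫ y in Ioo (Real.exp a) (Real.exp b), bnd y =
      2 * ∫ t in a..b, Real.sqrt (Real.exp (-t) - Real.exp (-2 * t)) := by
  have hea : 1 ≤ Real.exp a := Real.one_le_exp ha
  have heab : Real.exp a ≤ Real.exp b := Real.exp_le_exp.2 hab
  have hsub : Icc (Real.exp a) (Real.exp b) ⊆ Ici 1 := fun y hy => le_trans hea hy.1
  have hL : ∫ y in Ioo (Real.exp a) (Real.exp b), bnd y
      = fF (Real.exp b) - fF (Real.exp a) := by
    rw [← integral_Ioc_eq_integral_Ioo, ← intervalIntegral.integral_of_le heab]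
    apply intervalIntegral.integral_eq_sub_of_hasDeriv_right_of_le heab
    · exact continuousOn_fF.mono hsub
    · exact fun x hx => (hasDerivAt_fF (lt_of_le_of_lt hea hx.1)).hasDerivWithinAt
    · apply ContinuousOn.intervalIntegrable
      apply continuousOn_bnd.mono
      rw [uIcc_of_le heab]
      exact hsub
  have key : ∀ t ∈ Icc a b, bnd (Real.exp t) * Real.exp t / 2
      = Real.sqrt (Real.exp (-t) - Real.exp (-2 * t)) := by
    intro t ht
    have ht0 : 0 ≤ t := le_trans ha ht.1
    have he1 : 1 ≤ Real.exp t := Real.one_le_exp ht0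
    have hmul : Real.exp t * Real.exp (-t) = 1 := by rw [← Real.exp_add]; simp
    have h1 : Real.exp (-t) - Real.exp (-2 * t) = (Real.exp t - 1) * (Real.exp (-t)) ^ 2 := by
      have h2 : Real.exp (-2 * t) = Real.exp (-t) * Real.exp (-t) := by
        rw [← Real.exp_add]; ring_nf
      rw [h2]
      linear_combination (-Real.exp (-t)) * hmul
    rw [h1, Real.sqrt_mul (by linarith), Real.sqrt_sq (Real.exp_nonneg _), bnd]
    rw [Real.exp_neg]
    field_simp
  have hR : ∫ t in a..b, Real.sqrt (Real.exp (-t) - Real.exp (-2 * t))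
      = fF (Real.exp b) / 2 - fF (Real.exp a) / 2 := by
    apply intervalIntegral.integral_eq_sub_of_hasDeriv_right_of_le hab
    · apply ContinuousOn.div_const
      apply continuousOn_fF.comp Real.continuous_exp.continuousOn
      intro t ht
      exact Real.one_le_exp (le_trans ha ht.1)
    · intro t ht
      have hd : HasDerivAt (fun t => fF (Real.exp t) / 2) (bnd (Real.exp t) * Real.exp t / 2) t :=
        (((hasDerivAt_fF (by
          have := Real.one_le_exp (le_trans ha ht.1.le)
          have h2 : Real.exp a < Real.exp t := Real.exp_lt_exp.2 ht.1
          linarith)).comp t (Real.hasDerivAt_exp t)).div_const 2)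
      rw [← key t (Ioo_subset_Icc_self ht)] at *
      exact hd.hasDerivWithinAt
    · apply Continuous.intervalIntegrable
      apply Real.continuous_sqrt.comp
      continuity
  rw [hL, hR]
  ring

lemma fI_nonneg (R y : ℝ) : 0 ≤ fI R y := by rw [fI]; positivity

lemma fI_zero' {R y : ℝ} (h : (y - 1) * (R - y) ≤ 0) : fI R y = 0 := by
  rw [fI, Real.sqrt_eq_zero'.2 h]
  simp

lemma fI_zero {R y : ℝ} (hR : 1 < R) (hy : y ∉ Icc 1 R) : fI R y = 0 := by
  apply fI_zero'
  rcases not_and_or.1 hy with h | h <;> push_neg at h <;> nlinarith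

lemma integrable_fI {R : ℝ} (hR : 1 < R) : Integrable (fI R) := by
  have hind : fI R = (Icc 1 R).indicator (fI R) := by
    funext y
    by_cases hy : y ∈ Icc 1 R
    · rw [indicator_of_mem hy]
    · rw [indicator_of_notMem hy, fI_zero hR hy]
  rw [hind, integrable_indicator_iff measurableSet_Icc]
  apply ContinuousOn.integrableOn_Icc
  apply ContinuousOn.div
  · exact (continuous_const.mul (Real.continuous_sqrt.comp (by continuity))).continuousOn
  · exact (continuous_pow 2).continuousOn
  · intro y hy
    have : (1:ℝ) ≤ y := hy.1
    positivity

lemma toReal_lintegral_fI {R : ℝ} (hR : 1 < R) (T : Set ℝ) :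
    (∫⁻ y in T, ENNReal.ofReal (fI R y)).toReal = ∫ y in T, fI R y := by
  rw [← ofReal_integral_eq_lintegral_ofReal ((integrable_fI hR).integrableOn)
    (ae_of_all _ fun y => fI_nonneg R y),
    ENNReal.toReal_ofReal (integral_nonneg fun y => fI_nonneg R y)]

lemma exp_sq (ρ : ℝ) : Real.exp ρ * Real.exp ρ = Real.exp (2 * ρ) := by
  rw [← Real.exp_add]; ring_nf

lemma scaled (ρ y : ℝ) : fI (Real.exp (2 * ρ)) y = Real.exp ρ * hfun ρ y := by
  rw [fI, hfun]
  have hmul : Real.exp (2 * ρ) * Real.exp (-(2 * ρ)) = 1 := by rw [← Real.exp_add]; simp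
  have h1 : (y - 1) * (Real.exp (2 * ρ) - y)
      = Real.exp (2 * ρ) * ((y - 1) * (1 - y * Real.exp (-(2 * ρ)))) := by
    linear_combination (y * (y - 1)) * hmul
  rw [h1, Real.sqrt_mul (Real.exp_nonneg _),
    show Real.sqrt (Real.exp (2 * ρ)) = Real.exp ρ by
      rw [← exp_sq ρ]; exact Real.sqrt_mul_self (Real.exp_nonneg ρ)]
  ring

lemma integral_Ioi_zero_one {R : ℝ} (hR : 1 < R) :
    ∫ y in Ioi (0:ℝ), fI R y = ∫ y in Ioi (1:ℝ), fI R y := by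
  apply setIntegral_eq_of_subset_of_forall_diff_eq_zero measurableSet_Ioi
    (fun y hy => lt_trans one_pos hy)
  intro y hy
  have h1 : y ≤ 1 := by
    by_contra h
    push_neg at h
    exact hy.2 h
  exact fI_zero' (mul_nonpos_of_nonpos_of_nonneg (by linarith) (by linarith))

theorem slice_ratio_tendsto (a b : ℝ) (ha : 0 ≤ a) (hab : a ≤ b) :
    Tendsto
      (fun ρ : ℝ =>
        (hypArea {z ∈ hypBall ρ | a < Real.log z.im ∧ Real.log z.im < b}).toReal /
          (hypArea (hypBall ρ)).toReal)
      atTop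
      (nhds ((2 / Real.pi) * ∫ t in a..b,
        Real.sqrt (Real.exp (-t) - Real.exp (-2 * t)))) := by
  have hea : 1 ≤ Real.exp a := Real.one_le_exp ha
  have hlim : Tendsto (fun ρ => (∫ y in Ioo (Real.exp a) (Real.exp b), hfun ρ y) /
      (∫ y in Ioi (1:ℝ), hfun ρ y)) atTop
      (nhds ((∫ y in Ioo (Real.exp a) (Real.exp b), bnd y) / Real.pi)) :=
    (tendsto_N hea).div tendsto_D Real.pi_ne_zero
  have hval : (∫ y in Ioo (Real.exp a) (Real.exp b), bnd y) / Real.pi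
      = (2 / Real.pi) * ∫ t in a..b, Real.sqrt (Real.exp (-t) - Real.exp (-2 * t)) := by
    rw [integral_value ha hab]; ring
  rw [hval] at hlim
  refine Tendsto.congr' ?_ hlim
  filter_upwards [eventually_gt_atTop (0:ℝ)] with ρ hρ
  set R := Real.exp (2 * ρ) with hRdef
  have hR : 1 < R := by
    rw [hRdef, ← Real.exp_zero]
    exact Real.exp_lt_exp.2 (by linarith)
  have hball : hypBall ρ = {z : ℂ | z.im ∈ Ioi 0 ∧ z.re ^ 2 < (z.im - 1) * (R - z.im)} := by
    rw [hypBall_eq hρ]; rfl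
  have hden : (hypArea (hypBall ρ)).toReal
      = Real.exp ρ * ∫ y in Ioi (1:ℝ), hfun ρ y := by
    rw [hball, area_eq R (Ioi 0) measurableSet_Ioi (fun y hy => hy),
      toReal_lintegral_fI hR, integral_Ioi_zero_one hR, hRdef]
    simp only [scaled]
    exact MeasureTheory.integral_const_mul _ _
  have hslice : {z ∈ hypBall ρ | a < Real.log z.im ∧ Real.log z.im < b}
      = {z : ℂ | z.im ∈ Ioo (Real.exp a) (Real.exp b) ∧
          z.re ^ 2 < (z.im - 1) * (R - z.im)} := by
    rw [hball]
    ext z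
    simp only [mem_setOf_eq, mem_sep_iff, mem_Ioo, mem_Ioi]
    constructor
    · rintro ⟨⟨hz, hx⟩, hla, hlb⟩
      exact ⟨⟨(Real.lt_log_iff_exp_lt hz).1 hla, (Real.log_lt_iff_lt_exp hz).1 hlb⟩, hx⟩
    · rintro ⟨⟨h1, h2⟩, hx⟩
      have hz : 0 < z.im := lt_of_lt_of_le (Real.exp_pos a) h1.le
      exact ⟨⟨hz, hx⟩, (Real.lt_log_iff_exp_lt hz).2 h1, (Real.log_lt_iff_lt_exp hz).2 h2⟩
  have hnum : (hypArea {z ∈ hypBall ρ | a < Real.log z.im ∧ Real.log z.im < b}).toReal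
      = Real.exp ρ * ∫ y in Ioo (Real.exp a) (Real.exp b), hfun ρ y := by
    rw [hslice, area_eq R (Ioo _ _) measurableSet_Ioo
        (fun y hy => lt_trans (Real.exp_pos a) hy.1),
      toReal_lintegral_fI hR, hRdef]
    simp only [scaled]
    exact MeasureTheory.integral_const_mul _ _
  rw [hnum, hden]
  exact (mul_div_mul_left _ _ (Real.exp_ne_zero ρ)).symm
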